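/- For every real t ∈ (0,1] and integer k ≥ 2, k·(1 − t/k)^k − (k−1)·(1 − t/(k−1))^k ≥ 0. -/
import Mathlib


/-- Nonnegativity of `k (1 - t/k)^k - (k-1) (1 - t/(k-1))^k` for `t ∈ (0,1]`
and integers `k ≥ 2`. -/
theorem E1_nonneg (t : ℝ) (ht0 : 0 < t) (ht1 : t ≤ 1) (k : ℕ) (hk : 2 ≤ k) :
    (k : ℝ) * (1 - t / (k : ℝ)) ^ k - ((k : ℝ) - 1) * (1 - t / ((k : ℝ) - 1)) ^ k ≥ 0 := by
  have hk2 : (2:ℝ) ≤ (k:ℝ) := by exact_mod_cast hk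
  have hk1 : (1:ℝ) ≤ (k:ℝ) - 1 := by linarith
  have hk1pos : (0:ℝ) < (k:ℝ) - 1 := by linarith
  have hb0 : 0 ≤ 1 - t / ((k:ℝ) - 1) := by
    rw [sub_nonneg]
    exact div_le_one_of_le₀ (le_trans ht1 hk1) (le_of_lt hk1pos)
  have hba : 1 - t / ((k:ℝ) - 1) ≤ 1 - t / (k:ℝ) := by
    have : t / (k:ℝ) ≤ t / ((k:ℝ) - 1) := by
      apply div_le_div_of_nonneg_left (le_of_lt ht0) hk1pos
      linarith
    linarith
  have hpow : (1 - t / ((k:ℝ) - 1)) ^ k ≤ (1 - t / (k:ℝ)) ^ k :=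
    pow_le_pow_left₀ hb0 hba k
  have ha0 : 0 ≤ (1 - t / (k:ℝ)) ^ k := le_trans (pow_nonneg hb0 k) hpow
  nlinarith [mul_le_mul_of_nonneg_left hpow (by linarith : (0:ℝ) ≤ (k:ℝ) - 1)]
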